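/- Assume GCH, let κ be a regular uncountable cardinal, and let s be a function defined on the ordinals below κ whose values are cardinals below κ. Then there exists a class sequence Γ = ⟨x_α : α ∈ ON⟩ (a function from ordinals to sets of ordinals) such that every x_α has cardinality less than κ, and for every cardinal γ ≥ κ and every ordinal α < κ with cf(γ) ≥ s(α), every set x of ordinals below γ with |x| < s(α) occurs as x_β for some β < γ. -/

import Mathlib

open Cardinal Ordinal

lemma aux_bounded {γ : Cardinal.{0}} (hγ : ℵ₀ ≤ γ) {x : Set Ordinal.{0}}
    (hx : x ⊆ Set.Iio γ.ord) (hlt : #x < Cardinal.lift.{1} γ.ord.cof) :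
    ∃ δ < γ.ord, x ⊆ Set.Iio δ := by
  obtain ⟨c, hc⟩ := Cardinal.mem_range_lift_of_le hlt.le
  have hce : Cardinal.lift.{1} #c.out = Cardinal.lift.{0} #(↥x) := by
    rw [Cardinal.mk_out, Cardinal.lift_id', hc]
  obtain ⟨e⟩ := Cardinal.lift_mk_eq'.mp hce
  set f : c.out → Ordinal.{0} := fun i => (e i : Ordinal)
  have hclt : c < γ.ord.cof := by
    have := hc ▸ hlt
    exact (Cardinal.lift_lt).mp this
  have hsup : iSup f < γ.ord := by
    apply Ordinal.iSup_lt_ord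
    · rw [Cardinal.mk_out]; exact hclt
    · intro i; exact hx (e i).2
  refine ⟨iSup f + 1, ?_, ?_⟩
  · rw [Ordinal.add_one_eq_succ]
    exact (Cardinal.isSuccLimit_ord hγ).succ_lt hsup
  · intro ξ hξ
    have : ξ ≤ iSup f := by
      have := Ordinal.le_iSup f (e.symm ⟨ξ, hξ⟩)
      simpa [f] using this
    exact lt_of_le_of_lt this (lt_add_one _)

lemma aux_count
    (gch : ∀ c : Cardinal.{0}, ℵ₀ ≤ c → (2 : Cardinal.{0}) ^ c = Order.succ c)
    (κ : Cardinal.{0}) {γ : Cardinal.{0}} (hγ : ℵ₀ ≤ γ) :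
    #({x : Set Ordinal.{0} | (∃ δ < γ.ord, x ⊆ Set.Iio δ) ∧ #x < Cardinal.lift.{1} κ}) ≤
      Cardinal.lift.{1} γ := by
  have hsub : {x : Set Ordinal.{0} | (∃ δ < γ.ord, x ⊆ Set.Iio δ) ∧ #x < Cardinal.lift.{1} κ}
      ⊆ ⋃ δ ∈ Set.Iio γ.ord, (𝒫 (Set.Iio δ) : Set (Set Ordinal.{0})) := by
    rintro x ⟨⟨δ, hδ, hxδ⟩, -⟩
    exact Set.mem_biUnion hδ hxδ
  refine (Cardinal.mk_le_mk_of_subset hsub).trans ?_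
  refine (Cardinal.mk_biUnion_le _ _).trans ?_
  have h1 : #(Set.Iio γ.ord) = Cardinal.lift.{1} γ := by
    rw [Ordinal.mk_Iio_ordinal, Cardinal.card_ord]
  have h2 : ⨆ δ : Set.Iio γ.ord, #(𝒫 (Set.Iio δ.1) : Set (Set Ordinal.{0})) ≤
      Cardinal.lift.{1} γ := by
    apply ciSup_le'
    intro ⟨δ, hδ⟩
    rw [Cardinal.mk_powerset, Ordinal.mk_Iio_ordinal, ← Cardinal.lift_two_power]
    rw [Cardinal.lift_le]
    rcases le_or_gt ℵ₀ δ.card with h | h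
    · rw [gch _ h]
      exact Order.succ_le_of_lt (Cardinal.lt_ord.mp hδ)
    · exact le_of_lt (lt_of_lt_of_le
        (Cardinal.power_lt_aleph0 (by exact_mod_cast Cardinal.nat_lt_aleph0 2) h) hγ)
  calc #(Set.Iio γ.ord) * ⨆ δ : Set.Iio γ.ord, #(𝒫 (Set.Iio δ.1) : Set (Set Ordinal.{0}))
      ≤ Cardinal.lift.{1} γ * Cardinal.lift.{1} γ := by
        rw [h1]; exact mul_le_mul_right h2 _
    _ = Cardinal.lift.{1} γ := Cardinal.mul_eq_self (by simpa using hγ)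

theorem statement1
    (gch : ∀ c : Cardinal.{0}, ℵ₀ ≤ c → (2 : Cardinal.{0}) ^ c = Order.succ c)
    (κ : Cardinal.{0}) (hreg : κ.IsRegular) (hunc : ℵ₀ < κ)
    (s : Ordinal.{0} → Cardinal.{0}) (hs : ∀ α < κ.ord, s α < κ) :
    ∃ Γ : Ordinal.{0} → Set Ordinal.{0},
      (∀ α : Ordinal.{0}, #(Γ α) < Cardinal.lift.{1} κ) ∧
      ∀ γ : Cardinal.{0}, κ ≤ γ →
        ∀ α : Ordinal.{0}, α < κ.ord → s α ≤ γ.ord.cof →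
          ∀ x : Set Ordinal.{0}, x ⊆ Set.Iio γ.ord →
            #x < Cardinal.lift.{1} (s α) →
            ∃ β : Ordinal.{0}, β < γ.ord ∧ Γ β = x := by
  classical
  have hκℵ : ℵ₀ ≤ κ := hunc.le
  have hκlift : (0 : Cardinal.{1}) < Cardinal.lift.{1} κ := by
    simpa using lt_of_lt_of_le Cardinal.aleph0_pos hκℵ
  set B : Cardinal.{0} → Set (Set Ordinal.{0}) := fun γ =>
    {x | (∃ δ < γ.ord, x ⊆ Set.Iio δ) ∧ #x < Cardinal.lift.{1} κ} with hBdef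
  set N : Ordinal.{0} → Cardinal.{0} := fun β =>
    if β < κ.ord then κ else Order.succ β.card with hNdef
  have hBne : ∀ γ : Cardinal.{0}, κ ≤ γ → (∅ : Set Ordinal.{0}) ∈ B γ := by
    intro γ hγ
    refine ⟨⟨0, ?_, by simp⟩, by simpa using hκlift⟩
    rw [Cardinal.lt_ord]
    simpa using lt_of_lt_of_le (lt_of_lt_of_le Cardinal.aleph0_pos hκℵ) hγ
  have hNlt : ∀ (β : Ordinal.{0}) (γ : Cardinal.{0}), κ ≤ γ → N β ≤ γ → β < γ.ord := by
    intro β γ hκγ h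
    by_cases hb : β < κ.ord
    · exact lt_of_lt_of_le hb (Cardinal.ord_le_ord.mpr hκγ)
    · rw [hNdef] at h; simp only [if_neg hb] at h
      exact Cardinal.lt_ord.mpr (lt_of_lt_of_le (Order.lt_succ _) h)
  -- surjections onto B γ from the block {β | N β = γ}
  have hg : ∀ γ : Cardinal.{0}, ∃ g : Ordinal.{0} → Set Ordinal.{0},
      (∀ β, #(g β) < Cardinal.lift.{1} κ) ∧
      ((∅ : Set Ordinal.{0}) ∈ B γ →
        #(B γ) ≤ #({β : Ordinal.{0} | N β = γ}) →
        ∀ x ∈ B γ, ∃ β, N β = γ ∧ g β = x) := by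
    intro γ
    by_cases h : (∅ : Set Ordinal.{0}) ∈ B γ ∧ #(B γ) ≤ #({β : Ordinal.{0} | N β = γ})
    · obtain ⟨hne, hle⟩ := h
      obtain ⟨e⟩ := Cardinal.le_def _ _ |>.mp hle
      have : Nonempty ↥(B γ) := ⟨⟨∅, hne⟩⟩
      refine ⟨fun β => if hβ : N β = γ then (Function.invFun e ⟨β, hβ⟩ : ↥(B γ)).1 else ∅,
        ?_, ?_⟩
      · intro β
        show #(↥(if hβ : N β = γ then (Function.invFun e ⟨β, hβ⟩ : ↥(B γ)).1 else ∅)) <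
          Cardinal.lift.{1} κ
        by_cases hβ : N β = γ
        · rw [dif_pos hβ]
          exact ((Function.invFun e ⟨β, hβ⟩).2).2
        · rw [dif_neg hβ]; simpa using hκlift
      · intro _ _ x hx
        obtain ⟨b, hb⟩ := Function.invFun_surjective e.injective ⟨x, hx⟩
        have hb2 : N (b : Ordinal.{0}) = γ := b.2
        refine ⟨(b : Ordinal.{0}), hb2, ?_⟩
        show (if hβ : N (b : Ordinal.{0}) = γ then
          (Function.invFun e ⟨(b : Ordinal.{0}), hβ⟩ : ↥(B γ)).1 else ∅) = x
        rw [dif_pos hb2]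
        exact congrArg Subtype.val hb
    · refine ⟨fun _ => ∅, fun _ => by simpa using hκlift, fun h1 h2 => (h ⟨h1, h2⟩).elim⟩
  choose g hg1 hg2 using hg
  refine ⟨fun β => g (N β) β, fun β => hg1 _ _, ?_⟩
  intro γ hγκ α hα hcof x hx hxlt
  have hγℵ : ℵ₀ ≤ γ := hκℵ.trans hγκ
  have hsκ : s α < κ := hs α hα
  have hxκ : #x < Cardinal.lift.{1} κ := hxlt.trans_le (Cardinal.lift_le.mpr hsκ.le)
  have hxcof : #x < Cardinal.lift.{1} γ.ord.cof := hxlt.trans_le (Cardinal.lift_le.mpr hcof)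
  obtain ⟨δ, hδγ, hxδ⟩ := aux_bounded hγℵ hx hxcof
  by_cases hδκ : δ < κ.ord
  · -- use block κ
    have hxB : x ∈ B κ := ⟨⟨δ, hδκ, hxδ⟩, hxκ⟩
    have hsub : Set.Iio κ.ord ⊆ {β : Ordinal.{0} | N β = κ} := by
      intro β hβ; simp only [hNdef, Set.mem_setOf_eq, if_pos (show β < κ.ord from hβ)]
    have hcard : #(B κ) ≤ #({β : Ordinal.{0} | N β = κ}) := by
      refine (aux_count gch κ hκℵ).trans ?_
      calc Cardinal.lift.{1} κ = #(Set.Iio κ.ord) := by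
            rw [Ordinal.mk_Iio_ordinal, Cardinal.card_ord]
        _ ≤ _ := Cardinal.mk_le_mk_of_subset hsub
    obtain ⟨β, hNβ, hgβ⟩ := hg2 κ (hBne κ le_rfl) hcard x hxB
    refine ⟨β, hNlt β γ hγκ (hNβ.le.trans hγκ), ?_⟩
    show g (N β) β = x
    rw [hNβ]; exact hgβ
  · -- use block (succ δ.card)
    set c : Cardinal.{0} := δ.card with hcdef
    have hκc : κ ≤ c := by
      have : κ.ord ≤ δ := not_lt.mp hδκ
      simpa [hcdef] using (Cardinal.card_ord κ) ▸ Ordinal.card_le_card this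
    have hcγ : c < γ := Cardinal.lt_ord.mp hδγ
    have hscγ : Order.succ c ≤ γ := Order.succ_le_of_lt hcγ
    have hκsc : κ ≤ Order.succ c := hκc.trans (Order.le_succ c)
    have hxB : x ∈ B (Order.succ c) := ⟨⟨δ, Cardinal.lt_ord_succ_card δ, hxδ⟩, hxκ⟩
    have hsub : Set.Ico c.ord (Order.succ c).ord ⊆ {β : Ordinal.{0} | N β = Order.succ c} := by
      rintro β ⟨h1, h2⟩
      have hβκ : ¬ β < κ.ord := not_lt.mpr (le_trans (Cardinal.ord_le_ord.mpr hκc) h1)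
      have hβc : β.card = c := by
        apply le_antisymm
        · exact Order.lt_succ_iff.mp (Cardinal.lt_ord.mp h2)
        · simpa using (Cardinal.card_ord c) ▸ Ordinal.card_le_card h1
      simp only [hNdef, Set.mem_setOf_eq, if_neg hβκ, hβc]
    have hIco : Cardinal.lift.{1} (Order.succ c) ≤ #(Set.Ico c.ord (Order.succ c).ord) := by
      by_contra hlt
      push_neg at hlt
      have hun : Set.Iio (Order.succ c).ord = Set.Iio c.ord ∪ Set.Ico c.ord (Order.succ c).ord :=
        (Set.Iio_union_Ico_eq_Iio (Cardinal.ord_le_ord.mpr (Order.le_succ c))).symm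
      have h1 : Cardinal.lift.{1} (Order.succ c) ≤
          #(Set.Iio c.ord) + #(Set.Ico c.ord (Order.succ c).ord) := by
        calc Cardinal.lift.{1} (Order.succ c) = #(Set.Iio (Order.succ c).ord) := by
              rw [Ordinal.mk_Iio_ordinal, Cardinal.card_ord]
          _ ≤ _ := by rw [hun]; exact Cardinal.mk_union_le _ _
      have h2 : #(Set.Iio c.ord) < Cardinal.lift.{1} (Order.succ c) := by
        rw [Ordinal.mk_Iio_ordinal, Cardinal.card_ord, Cardinal.lift_lt]
        exact Order.lt_succ _
      exact absurd h1 (not_le.mpr (Cardinal.add_lt_of_lt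
        (by rw [← Cardinal.lift_aleph0.{1,0}]; exact Cardinal.lift_le.mpr (hκℵ.trans hκsc)) h2 hlt))
    have hcard : #(B (Order.succ c)) ≤ #({β : Ordinal.{0} | N β = Order.succ c}) :=
      (aux_count gch κ (hκℵ.trans hκsc)).trans
        (hIco.trans (Cardinal.mk_le_mk_of_subset hsub))
    obtain ⟨β, hNβ, hgβ⟩ := hg2 (Order.succ c) (hBne _ hκsc) hcard x hxB
    refine ⟨β, hNlt β γ hγκ (hNβ.le.trans hscγ), ?_⟩
    show g (N β) β = x
    rw [hNβ]; exact hgβ
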